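/- arXiv:2602.20388 — 3 statements merged into one kernel-verified Lean document; each statement's English description precedes it below -/
import Mathlib

section
/- Let V be a finite-dimensional real vector space, Π : V* → V skew-symmetric, W = im Π, and ω the induced symplectic form on W defined by ω(Π α, Π β) = −α(Π β). Then for every subspace C ⊆ V one has Π(C°) = (C ∩ W)^{ω}, where (C ∩ W)^{ω} = {w ∈ W : ω(w, v) = 0 for all v ∈ C ∩ W} is the ω-orthogonal of C ∩ W inside W, and C° is the annihilator of C in V*. -/
/-- For a skew-symmetric `Π : V* → V` with `W = im Π` and induced symplectic form
`ω` on `W` (given by `ω(Π α, Π β) = -α(Π β)`), for every subspace `C ⊆ V` one has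
`Π(C°) = (C ∩ W)^ω`, the `ω`-orthogonal of `C ∩ W` inside `W`. -/
theorem image_annihilator_eq_symplectic_orthogonal
    (V : Type*) [AddCommGroup V] [Module ℝ V] [FiniteDimensional ℝ V]
    (Pi : Module.Dual ℝ V →ₗ[ℝ] V)
    (hskew : ∀ α β : Module.Dual ℝ V, β (Pi α) = -α (Pi β))
    (ω : V → V → ℝ)
    (hω : ∀ α β : Module.Dual ℝ V, ω (Pi α) (Pi β) = -α (Pi β))
    (C : Submodule ℝ V) :
    Pi '' {α : Module.Dual ℝ V | ∀ x ∈ C, α x = 0}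
      = {w : V | w ∈ LinearMap.range Pi ∧
          ∀ v : V, v ∈ C → v ∈ LinearMap.range Pi → ω w v = 0} := by
  ext w
  simp only [Set.mem_image, Set.mem_setOf_eq]
  constructor
  · rintro ⟨α, hα, rfl⟩
    refine ⟨⟨α, rfl⟩, ?_⟩
    rintro v hvC ⟨β, rfl⟩
    rw [hω, hα _ hvC, neg_zero]
  · rintro ⟨⟨α, rfl⟩, h⟩
    have key : Pi α ∈ (C.dualAnnihilator).map Pi := by
      rw [← Subspace.dualAnnihilator_dualCoannihilator_eq
        (W := (C.dualAnnihilator).map Pi), Submodule.mem_dualCoannihilator]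
      intro γ hγ
      rw [Submodule.mem_dualAnnihilator] at hγ
      have hPiγC : Pi γ ∈ C := by
        rw [← Subspace.dualAnnihilator_dualCoannihilator_eq (W := C),
          Submodule.mem_dualCoannihilator]
        intro δ hδ
        have : γ (Pi δ) = 0 := hγ _ (Submodule.mem_map_of_mem hδ)
        rw [hskew γ δ, this, neg_zero]
      have := h (Pi γ) hPiγC ⟨γ, rfl⟩
      rw [hω] at this
      rw [hskew α γ]
      linarith
    obtain ⟨β, hβ, hβeq⟩ := key
    exact ⟨β, fun x hx => (Submodule.mem_dualAnnihilator β).mp hβ x hx, hβeq⟩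
end

section
/- Let V be a finite-dimensional real vector space, Π : V* → V skew-symmetric, W = im Π, and ω the induced symplectic form on W. A subspace C ⊆ V satisfies Π(C°) ⊆ C (i.e. C is coisotropic for Π) if and only if the subspace C ∩ W of the symplectic vector space (W, ω) is coisotropic in the symplectic sense, i.e. (C ∩ W)^{ω} ⊆ C ∩ W. -/
/-- For a skew-symmetric `Π : V* → V` with `W = im Π` and induced symplectic form
`ω` on `W`, a subspace `C ⊆ V` is coisotropic for `Π` (i.e. `Π(C°) ⊆ C`) if and
only if `C ∩ W` is coisotropic in the symplectic sense inside `(W, ω)`, i.e.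
`(C ∩ W)^ω ⊆ C ∩ W`. -/
theorem coisotropic_iff_symplectically_coisotropic_in_leaf
    (V : Type*) [AddCommGroup V] [Module ℝ V] [FiniteDimensional ℝ V]
    (Pi : Module.Dual ℝ V →ₗ[ℝ] V)
    (hskew : ∀ α β : Module.Dual ℝ V, β (Pi α) = -α (Pi β))
    (ω : V → V → ℝ)
    (hω : ∀ α β : Module.Dual ℝ V, ω (Pi α) (Pi β) = -α (Pi β))
    (C : Submodule ℝ V) :
    (∀ α : Module.Dual ℝ V, (∀ x ∈ C, α x = 0) → Pi α ∈ C)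
      ↔ (∀ w : V, w ∈ LinearMap.range Pi →
          (∀ v : V, v ∈ C → v ∈ LinearMap.range Pi → ω w v = 0) →
          (w ∈ C ∧ w ∈ LinearMap.range Pi)) := by
  constructor
  · intro hco w hw hperp
    refine ⟨?_, hw⟩
    obtain ⟨α, rfl⟩ := hw
    -- α vanishes on C ⊓ range Pi
    have hα : α ∈ (C ⊓ LinearMap.range Pi).dualAnnihilator := by
      rw [Submodule.mem_dualAnnihilator]
      rintro v ⟨hvC, β, rfl⟩
      have := hperp (Pi β) hvC ⟨β, rfl⟩
      rw [hω] at this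
      linarith
    rw [Subspace.dualAnnihilator_inf_eq, Submodule.mem_sup] at hα
    obtain ⟨a, ha, b, hb, rfl⟩ := hα
    have hPib : Pi b = 0 := by
      rw [← Module.forall_dual_apply_eq_zero_iff ℝ (Pi b)]
      intro φ
      rw [hskew]
      rw [Submodule.mem_dualAnnihilator] at hb
      have := hb (Pi φ) ⟨φ, rfl⟩
      simp [this]
    have haC : Pi a ∈ C := by
      apply hco
      intro x hx
      rw [Submodule.mem_dualAnnihilator] at ha
      exact ha x hx
    rw [map_add, hPib, add_zero]
    exact haC
  · intro hsym α hα
    have := hsym (Pi α) ⟨α, rfl⟩ ?_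
    · exact this.1
    · rintro v hvC ⟨β, rfl⟩
      rw [hω]
      have := hα (Pi β) hvC
      linarith
end

section
/- Let W and V be finite-dimensional real vector spaces, μ : W → V a surjective linear map, Π_W : W* → W a skew-symmetric isomorphism (a linear symplectic structure on W), and define Π_V := μ ∘ Π_W ∘ μ* : V* → V, where μ* is the transpose of μ. Then for every subspace C ⊆ V, C is coisotropic for Π_V (i.e. Π_V(C°) ⊆ C) if and only if μ^{-1}(C) is coisotropic for Π_W (i.e. Π_W((μ^{-1}C)°) ⊆ μ^{-1}(C)). -/
/-- Let `μ : W → V` be a surjective linear map, `Π_W : W* → W` a skew-symmetric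
isomorphism (a linear symplectic structure on `W`), and `Π_V = μ ∘ Π_W ∘ μ*`.
Then a subspace `C ⊆ V` is coisotropic for `Π_V` iff `μ⁻¹(C)` is coisotropic
for `Π_W`. -/
theorem coisotropic_iff_preimage_coisotropic_realization
    (W V : Type*) [AddCommGroup W] [Module ℝ W] [FiniteDimensional ℝ W]
    [AddCommGroup V] [Module ℝ V] [FiniteDimensional ℝ V]
    (μ : W →ₗ[ℝ] V) (hμ : Function.Surjective μ)
    (PiW : Module.Dual ℝ W →ₗ[ℝ] W)
    (hskewW : ∀ α β : Module.Dual ℝ W, β (PiW α) = -α (PiW β))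
    (hbij : Function.Bijective PiW)
    (PiV : Module.Dual ℝ V →ₗ[ℝ] V)
    (hPiV : PiV = μ ∘ₗ PiW ∘ₗ μ.dualMap)
    (C : Submodule ℝ V) :
    (∀ α : Module.Dual ℝ V, (∀ x ∈ C, α x = 0) → PiV α ∈ C)
      ↔ (∀ β : Module.Dual ℝ W,
          (∀ w ∈ C.comap μ, β w = 0) → PiW β ∈ C.comap μ) := by
  subst hPiV
  obtain ⟨g, hg⟩ := μ.exists_rightInverse_of_surjective (LinearMap.range_eq_top.mpr hμ)
  constructor
  · intro h β hβ
    -- factor β through μ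
    set α : Module.Dual ℝ V := β ∘ₗ g with hα
    have hfac : μ.dualMap α = β := by
      ext w
      have hker : g (μ w) - w ∈ C.comap μ := by
        simp only [Submodule.mem_comap, map_sub]
        have : μ (g (μ w)) = μ w := by
          have := LinearMap.congr_fun hg (μ w)
          simpa using this
        simp [this]
      have := hβ _ hker
      simp only [map_sub] at this
      have : β (g (μ w)) = β w := by linarith [this]
      simpa [α] using this
    have hαC : ∀ x ∈ C, α x = 0 := by
      intro x hx
      obtain ⟨w, rfl⟩ := hμ x
      have hw : w ∈ C.comap μ := hx
      have hgw : g (μ w) - w ∈ C.comap μ := by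
        simp only [Submodule.mem_comap, map_sub]
        have : μ (g (μ w)) = μ w := by
          have := LinearMap.congr_fun hg (μ w)
          simpa using this
        simp [this]
      have h1 := hβ _ hgw
      have h2 := hβ _ hw
      simp only [map_sub] at h1
      simp [α]
      linarith
    have := h α hαC
    simpa [hfac] using this
  · intro h α hα
    have hβ : ∀ w ∈ C.comap μ, (μ.dualMap α) w = 0 := by
      intro w hw
      exact hα _ hw
    have := h (μ.dualMap α) hβ
    simpa using this
end
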